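/- Let (X, 𝒰, ∫) be a Daniell space and let f_1, f_2, … ∈ 𝒰*. If ∑_{n=1}^∞ ∫|f_n| < ∞, then there exists f ∈ 𝒰* such that f(x) = ∑_{n=1}^∞ f_n(x) for every x ∈ X at which ∑_{n=1}^∞ |f_n(x)| < ∞ (i.e., f ≃ f_1 + f_2 + ⋯ with f_n ∈ 𝒰*). -/

import Mathlib

set_option maxHeartbeats 1000000

open Filter Topology

/-- A Daniell space: a Riesz space `U` of real-valued functions on `X` together with a
positive linear functional `integral` satisfying the Daniell continuity condition (II). -/
structure DaniellSpace (X : Type*) where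
  U : Set (X → ℝ)
  integral : (X → ℝ) → ℝ
  zero_mem : (0 : X → ℝ) ∈ U
  add_mem : ∀ {f g : X → ℝ}, f ∈ U → g ∈ U → f + g ∈ U
  smul_mem : ∀ (c : ℝ) {f : X → ℝ}, f ∈ U → c • f ∈ U
  sup_mem : ∀ {f g : X → ℝ}, f ∈ U → g ∈ U → f ⊔ g ∈ U
  inf_mem : ∀ {f g : X → ℝ}, f ∈ U → g ∈ U → f ⊓ g ∈ U
  integral_add : ∀ {f g : X → ℝ}, f ∈ U → g ∈ U →
    integral (f + g) = integral f + integral g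
  integral_smul : ∀ (c : ℝ) {f : X → ℝ}, f ∈ U → integral (c • f) = c * integral f
  integral_nonneg : ∀ {f : X → ℝ}, f ∈ U → (∀ x, 0 ≤ f x) → 0 ≤ integral f
  integral_tendsto_zero : ∀ f : ℕ → X → ℝ, (∀ n, f n ∈ U) → Antitone f →
    (∀ x, Tendsto (fun n => f n x) atTop (𝓝 (0 : ℝ))) →
    Tendsto (fun n => integral (f n)) atTop (𝓝 (0 : ℝ))

/-- `f ≃ ∑ fₙ` : the `fₙ` belong to `U`, `∑ ∫|fₙ| < ∞`, and `f x = ∑ fₙ x` at every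
point where the series converges absolutely. -/
def DaniellSpace.Rep {X : Type*} (D : DaniellSpace X) (f : X → ℝ) (fs : ℕ → X → ℝ) : Prop :=
  (∀ n, fs n ∈ D.U) ∧ (Summable fun n => D.integral |fs n|) ∧
  ∀ x, (Summable fun n => |fs n x|) → HasSum (fun n => fs n x) (f x)

/-- The extension `𝒰*` of `𝒰`. -/
def DaniellSpace.Ustar {X : Type*} (D : DaniellSpace X) : Set (X → ℝ) :=
  {f | ∃ fs, D.Rep f fs}

-- The integral on `𝒰*`: `∫ f = ∑ ∫ fₙ` for any representation `f ≃ ∑ fₙ`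
-- (the value is independent of the representation).
open Classical in
noncomputable def DaniellSpace.integralStar {X : Type*} (D : DaniellSpace X)
    (f : X → ℝ) : ℝ :=
  if h : ∃ fs, D.Rep f fs then ∑' n, D.integral (h.choose n) else 0

/-- A Daniell space is complete if `f ≃ ∑ fₙ` with all `fₙ ∈ 𝒰` implies `f ∈ 𝒰`. -/
def DaniellSpace.Complete {X : Type*} (D : DaniellSpace X) : Prop :=
  ∀ (f : X → ℝ) (fs : ℕ → X → ℝ), D.Rep f fs → f ∈ D.U

/-- A null set: its characteristic function is a null function. -/
def DaniellSpace.NullSet {X : Type*} (D : DaniellSpace X) (S : Set X) : Prop :=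
  S.indicator (fun _ => (1 : ℝ)) ∈ D.U ∧ D.integral (S.indicator fun _ => (1 : ℝ)) = 0

namespace DaniellSpace

variable {X : Type*} (D : DaniellSpace X)

lemma neg_mem' {f : X → ℝ} (hf : f ∈ D.U) : -f ∈ D.U := by
  simpa using D.smul_mem (-1) hf

lemma sub_mem' {f g : X → ℝ} (hf : f ∈ D.U) (hg : g ∈ D.U) : f - g ∈ D.U := by
  simpa [sub_eq_add_neg] using D.add_mem hf (D.neg_mem' hg)

lemma abs_mem' {f : X → ℝ} (hf : f ∈ D.U) : |f| ∈ D.U := by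
  have h : |f| = f ⊔ (-f) := rfl
  rw [h]; exact D.sup_mem hf (D.neg_mem' hf)

lemma sum_mem' (g : ℕ → X → ℝ) (hg : ∀ k, g k ∈ D.U) (N : ℕ) :
    (∑ k ∈ Finset.range N, g k) ∈ D.U := by
  induction N with
  | zero => simpa using D.zero_mem
  | succ n ih => rw [Finset.sum_range_succ]; exact D.add_mem ih (hg n)

lemma integral_neg' {f : X → ℝ} (hf : f ∈ D.U) :
    D.integral (-f) = -D.integral f := by
  simpa using D.integral_smul (-1) hf

lemma integral_sub' {f g : X → ℝ} (hf : f ∈ D.U) (hg : g ∈ D.U) :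
    D.integral (f - g) = D.integral f - D.integral g := by
  rw [sub_eq_add_neg, D.integral_add hf (D.neg_mem' hg), D.integral_neg' hg]; ring

lemma integral_zero' : D.integral 0 = 0 := by
  simpa using D.integral_smul 0 D.zero_mem

lemma integral_sum' (g : ℕ → X → ℝ) (hg : ∀ k, g k ∈ D.U) (N : ℕ) :
    D.integral (∑ k ∈ Finset.range N, g k) = ∑ k ∈ Finset.range N, D.integral (g k) := by
  induction N with
  | zero => simpa using D.integral_zero'
  | succ n ih =>
      rw [Finset.sum_range_succ, Finset.sum_range_succ,
        D.integral_add (D.sum_mem' g hg n) (hg n), ih]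

lemma integral_mono' {f g : X → ℝ} (hf : f ∈ D.U) (hg : g ∈ D.U) (h : ∀ x, f x ≤ g x) :
    D.integral f ≤ D.integral g := by
  have h0 : 0 ≤ D.integral (g - f) :=
    D.integral_nonneg (D.sub_mem' hg hf) fun x => by
      simp only [Pi.sub_apply]; linarith [h x]
  have h1 := D.integral_sub' hg hf
  linarith

lemma abs_integral_le' {f : X → ℝ} (hf : f ∈ D.U) :
    |D.integral f| ≤ D.integral |f| := by
  have h1 : D.integral f ≤ D.integral |f| :=
    D.integral_mono' hf (D.abs_mem' hf) fun x => by
      simp only [Pi.abs_apply]; exact le_abs_self _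
  have h2 : D.integral (-f) ≤ D.integral |f| :=
    D.integral_mono' (D.neg_mem' hf) (D.abs_mem' hf) fun x => by
      simp only [Pi.abs_apply, Pi.neg_apply]; exact neg_le_abs _
  rw [D.integral_neg' hf] at h2
  exact abs_le.2 ⟨by linarith, h1⟩

/-- The fundamental lemma: if `u ∈ 𝒰`, the `wₖ ∈ 𝒰` are nonnegative with summable
integrals, and `u ≤ ∑ wₖ` at every point of convergence of the (nonnegative) series,
then `∫ u ≤ ∑ ∫ wₖ`. Uses the Daniell condition (II). -/
lemma key {u : X → ℝ} (hu : u ∈ D.U) (w : ℕ → X → ℝ) (hwU : ∀ k, w k ∈ D.U)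
    (hw0 : ∀ k x, 0 ≤ w k x) (hws : Summable fun k => D.integral (w k))
    (hle : ∀ x, (Summable fun k => w k x) → u x ≤ ∑' k, w k x) :
    D.integral u ≤ ∑' k, D.integral (w k) := by
  set S : ℕ → X → ℝ := fun m => ∑ k ∈ Finset.range m, w k with hS
  set v : ℕ → X → ℝ := fun m => (u - S m) ⊔ 0 with hv
  have hSU : ∀ m, S m ∈ D.U := fun m => D.sum_mem' w hwU m
  have hvU : ∀ m, v m ∈ D.U := fun m => D.sup_mem (D.sub_mem' hu (hSU m)) D.zero_mem
  have hSx : ∀ m x, S m x = ∑ k ∈ Finset.range m, w k x := fun m x => by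
    simp [hS, Finset.sum_apply]
  have hvx : ∀ m x, v m x = max (u x - S m x) 0 := fun m x => by
    rw [hv]; simp only [Pi.sup_apply, Pi.sub_apply, Pi.zero_apply]
  have hSmono : ∀ m x, S m x ≤ S (m + 1) x := fun m x => by
    rw [hSx, hSx, Finset.sum_range_succ]
    exact le_add_of_nonneg_right (hw0 m x)
  have hvanti : Antitone v := by
    apply antitone_nat_of_succ_le
    intro m x
    rw [hvx, hvx]
    exact max_le_max (by linarith [hSmono m x]) le_rfl
  have hv0 : ∀ x, Tendsto (fun m => v m x) atTop (𝓝 0) := by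
    intro x
    by_cases hsx : Summable fun k => w k x
    · have h1 : Tendsto (fun m => S m x) atTop (𝓝 (∑' k, w k x)) := by
        have := hsx.hasSum.tendsto_sum_nat
        exact this.congr fun m => (hSx m x).symm
      have h2 : Tendsto (fun m => max (u x - S m x) 0) atTop
          (𝓝 (max (u x - ∑' k, w k x) 0)) :=
        (tendsto_const_nhds.sub h1).max tendsto_const_nhds
      have h3 : max (u x - ∑' k, w k x) 0 = 0 :=
        max_eq_right (by linarith [hle x hsx])
      rw [h3] at h2
      exact h2.congr fun m => (hvx m x).symm
    · have h1 : Tendsto (fun m => S m x) atTop atTop := by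
        have := (not_summable_iff_tendsto_nat_atTop_of_nonneg (fun k => hw0 k x)).1 hsx
        exact this.congr fun m => (hSx m x).symm
      have h2 : (fun m => v m x) =ᶠ[atTop] (fun _ => (0 : ℝ)) := by
        filter_upwards [h1.eventually_ge_atTop (u x)] with m hm
        rw [hvx]
        exact max_eq_right (by linarith)
      exact Tendsto.congr' h2.symm tendsto_const_nhds
  have hIv : Tendsto (fun m => D.integral (v m)) atTop (𝓝 0) :=
    D.integral_tendsto_zero v hvU hvanti hv0
  have hmain : ∀ m, D.integral u ≤ D.integral (v m) + ∑ k ∈ Finset.range m, D.integral (w k) := by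
    intro m
    have hle' : ∀ x, u x ≤ (v m + S m) x := fun x => by
      have : u x - S m x ≤ max (u x - S m x) 0 := le_max_left _ _
      rw [Pi.add_apply, hvx]
      linarith
    calc D.integral u ≤ D.integral (v m + S m) :=
          D.integral_mono' hu (D.add_mem (hvU m) (hSU m)) hle'
      _ = D.integral (v m) + ∑ k ∈ Finset.range m, D.integral (w k) := by
          rw [D.integral_add (hvU m) (hSU m), D.integral_sum' w hwU m]
  have hlim : Tendsto (fun m => D.integral (v m) + ∑ k ∈ Finset.range m, D.integral (w k))
      atTop (𝓝 (0 + ∑' k, D.integral (w k))) := hIv.add hws.hasSum.tendsto_sum_nat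
  have := ge_of_tendsto' hlim hmain
  linarith

/-- If `f ≃ ∑ gₖ` then `|f| ∈ 𝒰*`. -/
lemma abs_mem_Ustar {f : X → ℝ} {g : ℕ → X → ℝ} (hg : D.Rep f g) : |f| ∈ D.Ustar := by
  obtain ⟨hgU, hgS, hgP⟩ := hg
  set S : ℕ → X → ℝ := fun m => ∑ k ∈ Finset.range m, g k with hS
  set s : ℕ → X → ℝ := fun m => |S (m + 1)| - |S m| with hs
  set t : ℕ → X → ℝ := fun j => if j % 2 = 0 then g (j / 2) else s (j / 2) - g (j / 2) with ht
  have hSU : ∀ m, S m ∈ D.U := fun m => D.sum_mem' g hgU m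
  have hsU : ∀ m, s m ∈ D.U := fun m =>
    D.sub_mem' (D.abs_mem' (hSU (m + 1))) (D.abs_mem' (hSU m))
  have htU : ∀ j, t j ∈ D.U := fun j => by
    rw [ht]; dsimp only
    split
    · exact hgU _
    · exact D.sub_mem' (hsU _) (hgU _)
  have hteven : ∀ k, t (2 * k) = g k := fun k => by
    have h1 : 2 * k % 2 = 0 := by omega
    have h2 : 2 * k / 2 = k := by omega
    rw [ht]; dsimp only; rw [if_pos h1, h2]
  have htodd : ∀ k, t (2 * k + 1) = s k - g k := fun k => by
    have h1 : ¬((2 * k + 1) % 2 = 0) := by omega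
    have h2 : (2 * k + 1) / 2 = k := by omega
    rw [ht]; dsimp only; rw [if_neg h1, h2]
  have hSx : ∀ m x, S m x = ∑ k ∈ Finset.range m, g k x := fun m x => by
    simp [hS, Finset.sum_apply]
  have hsx : ∀ m x, s m x = |S (m + 1) x| - |S m x| := fun m x => by
    rw [hs]; simp only [Pi.sub_apply, Pi.abs_apply]
  have hsabs : ∀ m x, |s m x| ≤ |g m x| := fun m x => by
    rw [hsx]
    have h1 : S (m + 1) x - S m x = g m x := by
      rw [hSx, hSx, Finset.sum_range_succ]; ring
    calc |(|S (m + 1) x| - |S m x|)| ≤ |S (m + 1) x - S m x| :=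
          abs_abs_sub_abs_le_abs_sub _ _
      _ = |g m x| := by rw [h1]
  have hIeven : Summable fun k => D.integral |t (2 * k)| := by
    refine hgS.congr fun k => ?_
    rw [hteven]
  have hIodd : Summable fun k => D.integral |t (2 * k + 1)| := by
    refine Summable.of_nonneg_of_le
      (fun k => D.integral_nonneg (D.abs_mem' (htU _)) fun x => by
        simp only [Pi.abs_apply]; exact abs_nonneg _)
      (fun k => ?_) (hgS.mul_left 2)
    have hmem : ((2 : ℝ) • |g k|) ∈ D.U := D.smul_mem 2 (D.abs_mem' (hgU k))
    have hptle : ∀ x, |t (2 * k + 1)| x ≤ ((2 : ℝ) • |g k|) x := fun x => by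
      rw [htodd]
      simp only [Pi.abs_apply, Pi.sub_apply, Pi.smul_apply, smul_eq_mul]
      calc |s k x - g k x| ≤ |s k x| + |g k x| := abs_sub _ _
        _ ≤ |g k x| + |g k x| := by linarith [hsabs k x]
        _ = 2 * |g k x| := by ring
    calc D.integral |t (2 * k + 1)| ≤ D.integral ((2 : ℝ) • |g k|) :=
          D.integral_mono' (D.abs_mem' (htU _)) hmem hptle
      _ = 2 * D.integral |g k| := D.integral_smul 2 (D.abs_mem' (hgU k))
  have hIt : Summable fun j => D.integral |t j| :=
    (HasSum.even_add_odd (f := fun j => D.integral |t j|) hIeven.hasSum hIodd.hasSum).summable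
  refine ⟨t, htU, hIt, ?_⟩
  intro x hx
  have hinj2 : Function.Injective fun k : ℕ => 2 * k := fun a b hab => by
    have h2ab : 2 * a = 2 * b := hab
    omega
  have hinj2' : Function.Injective fun k : ℕ => 2 * k + 1 := fun a b hab => by
    have h2ab : 2 * a + 1 = 2 * b + 1 := hab
    omega
  have hxe : Summable fun k => |g k x| := by
    have := hx.comp_injective hinj2
    refine this.congr fun k => ?_
    simp only [Function.comp]
    rw [hteven]
  have hfx : HasSum (fun k => g k x) (f x) := hgP x hxe
  have hxo : Summable fun k => |t (2 * k + 1) x| := by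
    have := hx.comp_injective hinj2'
    exact this.congr fun k => rfl
  have hsxsum : Summable fun k => s k x := by
    apply Summable.of_abs
    refine Summable.of_nonneg_of_le (fun k => abs_nonneg _) (fun k => ?_) (hxo.add hxe)
    have hkx : s k x = t (2 * k + 1) x + g k x := by
      rw [htodd]; simp only [Pi.sub_apply]; ring
    calc |s k x| = |t (2 * k + 1) x + g k x| := by rw [hkx]
      _ ≤ |t (2 * k + 1) x| + |g k x| := abs_add_le _ _
  have htel : ∀ m, ∑ k ∈ Finset.range m, s k x = |S m x| := by
    intro m
    induction m with
    | zero => simp [hSx]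
    | succ n ih => rw [Finset.sum_range_succ, ih, hsx]; ring
  have hStend : Tendsto (fun m => S m x) atTop (𝓝 (f x)) := by
    have := hfx.tendsto_sum_nat
    exact this.congr fun m => (hSx m x).symm
  have habs_tend : Tendsto (fun m => |S m x|) atTop (𝓝 |f x|) := hStend.abs
  have hssum : HasSum (fun k => s k x) |f x| := by
    have h1 := hsxsum.hasSum
    have h2 := h1.tendsto_sum_nat
    have h3 : Tendsto (fun m => ∑ k ∈ Finset.range m, s k x) atTop (𝓝 |f x|) :=
      habs_tend.congr fun m => (htel m).symm
    have h4 : ∑' k, s k x = |f x| := tendsto_nhds_unique h2 h3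
    rwa [h4] at h1
  have hoddHS : HasSum (fun k => t (2 * k + 1) x) (|f x| - f x) := by
    refine (hssum.sub hfx).congr_fun fun k => ?_
    rw [htodd]; simp only [Pi.sub_apply]
  have hevenHS : HasSum (fun k => t (2 * k) x) (f x) := by
    refine hfx.congr_fun fun k => ?_
    rw [hteven]
  have hfin := HasSum.even_add_odd (f := fun j => t j x) hevenHS hoddHS
  have hval : f x + (|f x| - f x) = |f| x := by
    simp only [Pi.abs_apply]; ring
  rwa [hval] at hfin

/-- Trimming lemma: given `f ≃ ∑ gₖ` and a representation `|f| ≃ ∑ hₖ`, for every `ε > 0`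
there is a representation `f ≃ ∑ gₖ'` whose total variation `∑ ∫|gₖ'|` is at most
`∑ ∫ hₖ + ε`. -/
lemma trim {f : X → ℝ} {g h : ℕ → X → ℝ} (hg : D.Rep f g) (hh : D.Rep |f| h)
    {ε : ℝ} (hε : 0 < ε) :
    ∃ g' : ℕ → X → ℝ, D.Rep f g' ∧
      ∑' k, D.integral |g' k| ≤ (∑' k, D.integral (h k)) + ε := by
  obtain ⟨hgU, hgS, hgP⟩ := hg
  obtain ⟨hhU, hhS, hhP⟩ := hh
  have hb : Summable fun k => D.integral (h k) := by
    apply Summable.of_abs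
    exact Summable.of_nonneg_of_le (fun k => abs_nonneg _)
      (fun k => D.abs_integral_le' (hhU k)) hhS
  have hε4 : (0 : ℝ) < ε / 4 := by linarith
  obtain ⟨N, hN⟩ := ((tendsto_sum_nat_add fun k => D.integral |g k|).eventually
    (gt_mem_nhds hε4)).exists
  have hevM1 := ((tendsto_sum_nat_add fun k => D.integral |h k|).eventually
    (gt_mem_nhds hε4))
  have hevM2 := (hb.hasSum.tendsto_sum_nat.eventually
    (gt_mem_nhds (show (∑' k, D.integral (h k)) < (∑' k, D.integral (h k)) + ε / 4 by linarith)))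
  obtain ⟨M, hM1, hM2⟩ := (hevM1.and hevM2).exists
  set g' : ℕ → X → ℝ := fun j =>
    if j = 0 then ∑ k ∈ Finset.range N, g k else g (j - 1 + N) with hg'
  have hg'0 : g' 0 = ∑ k ∈ Finset.range N, g k := by simp [hg']
  have hg'succ : ∀ j, g' (j + 1) = g (j + N) := fun j => by simp [hg']
  have hg'U : ∀ j, g' j ∈ D.U := fun j => by
    rw [hg']; dsimp only; split
    · exact D.sum_mem' g hgU N
    · exact hgU _
  have hshiftS : Summable fun j => D.integral |g (j + N)| :=
    (summable_nat_add_iff N).2 hgS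
  have hg'S : Summable fun j => D.integral |g' j| := by
    apply (summable_nat_add_iff (f := fun j => D.integral |g' j|) 1).1
    refine hshiftS.congr fun j => ?_
    rw [hg'succ]
  have hg'P : ∀ x, (Summable fun j => |g' j x|) → HasSum (fun j => g' j x) (f x) := by
    intro x hx
    have h1 : Summable fun j => |g (j + N) x| := by
      have h0 := (summable_nat_add_iff (f := fun j => |g' j x|) 1).2 hx
      refine h0.congr fun j => ?_
      rw [hg'succ]
    have h2 : Summable fun k => |g k x| :=
      (summable_nat_add_iff (f := fun k => |g k x|) N).1 h1
    have h3 : HasSum (fun k => g k x) (f x) := hgP x h2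
    have h4 : HasSum (fun j => g (j + N) x)
        (f x - ∑ k ∈ Finset.range N, g k x) := by
      apply (hasSum_nat_add_iff (f := fun k => g k x) N).2
      have heq : f x - ∑ k ∈ Finset.range N, g k x + ∑ k ∈ Finset.range N, g k x = f x := by
        ring
      rwa [heq]
    have h5 : HasSum (fun j => g' j x)
        ((f x - ∑ k ∈ Finset.range N, g k x) + ∑ i ∈ Finset.range 1, g' i x) := by
      apply (hasSum_nat_add_iff (f := fun j => g' j x) 1).1
      refine h4.congr_fun fun j => ?_
      rw [hg'succ]
    have h6 : (f x - ∑ k ∈ Finset.range N, g k x) + ∑ i ∈ Finset.range 1, g' i x = f x := by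
      rw [Finset.sum_range_one, hg'0, Finset.sum_apply]; ring
    rwa [h6] at h5
  refine ⟨g', ⟨hg'U, hg'S, hg'P⟩, ?_⟩
  -- bound ∫ |g' 0| using the key lemma
  set w : ℕ → X → ℝ := fun j => |h (j + M)| + |g (j + N)| with hw
  have hwU : ∀ j, w j ∈ D.U := fun j =>
    D.add_mem (D.abs_mem' (hhU _)) (D.abs_mem' (hgU _))
  have hwxval : ∀ j x, w j x = |h (j + M) x| + |g (j + N) x| := fun j x => by
    rw [hw]; simp only [Pi.add_apply, Pi.abs_apply]
  have hw0 : ∀ j x, 0 ≤ w j x := fun j x => by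
    rw [hwxval]; positivity
  have hwint : ∀ j, D.integral (w j) = D.integral |h (j + M)| + D.integral |g (j + N)| :=
    fun j => D.integral_add (D.abs_mem' (hhU _)) (D.abs_mem' (hgU _))
  have hhshift : Summable fun j => D.integral |h (j + M)| :=
    (summable_nat_add_iff M).2 hhS
  have hws : Summable fun j => D.integral (w j) :=
    (hhshift.add hshiftS).congr fun j => (hwint j).symm
  have hwtsum : ∑' j, D.integral (w j) =
      (∑' j, D.integral |h (j + M)|) + ∑' j, D.integral |g (j + N)| := by
    rw [← Summable.tsum_add hhshift hshiftS]
    exact tsum_congr fun j => hwint j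
  have hu'U : (|g' 0| - ∑ k ∈ Finset.range M, h k) ∈ D.U :=
    D.sub_mem' (D.abs_mem' (hg'U 0)) (D.sum_mem' h hhU M)
  have hkey : D.integral (|g' 0| - ∑ k ∈ Finset.range M, h k) ≤ ∑' j, D.integral (w j) := by
    apply D.key hu'U w hwU hw0 hws
    intro x hwx
    have hwh : Summable fun j => |h (j + M) x| := by
      refine Summable.of_nonneg_of_le (fun j => abs_nonneg _) (fun j => ?_) hwx
      rw [hwxval]
      exact le_add_of_nonneg_right (abs_nonneg _)
    have hwg : Summable fun j => |g (j + N) x| := by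
      refine Summable.of_nonneg_of_le (fun j => abs_nonneg _) (fun j => ?_) hwx
      rw [hwxval]
      exact le_add_of_nonneg_left (abs_nonneg _)
    have hhx : Summable fun k => |h k x| :=
      (summable_nat_add_iff (f := fun k => |h k x|) M).1 hwh
    have hgx : Summable fun k => |g k x| :=
      (summable_nat_add_iff (f := fun k => |g k x|) N).1 hwg
    have hfabs : HasSum (fun k => h k x) |f x| := by
      have := hhP x hhx
      simpa only [Pi.abs_apply] using this
    have hfx : HasSum (fun k => g k x) (f x) := hgP x hgx
    have hgx' : Summable fun k => g k x := hfx.summable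
    have heq1 : ∑ k ∈ Finset.range N, g k x + ∑' j, g (j + N) x = f x := by
      rw [Summable.sum_add_tsum_nat_add N hgx', hfx.tsum_eq]
    have h2 : |g' 0 x| ≤ |f x| + ∑' j, |g (j + N) x| := by
      have habs : |∑' j, g (j + N) x| ≤ ∑' j, |g (j + N) x| := by
        simpa [Real.norm_eq_abs] using
          norm_tsum_le_tsum_norm (f := fun j => g (j + N) x)
            (by simpa [Real.norm_eq_abs] using hwg)
      have hval0 : g' 0 x = ∑ k ∈ Finset.range N, g k x := by
        rw [hg'0, Finset.sum_apply]
      have hval1 : g' 0 x = f x - ∑' j, g (j + N) x := by rw [hval0]; linarith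
      calc |g' 0 x| = |f x - ∑' j, g (j + N) x| := by rw [hval1]
        _ ≤ |f x| + |∑' j, g (j + N) x| := abs_sub _ _
        _ ≤ |f x| + ∑' j, |g (j + N) x| := by linarith
    have hhx' : Summable fun k => h k x := hfabs.summable
    have h3 : |f x| ≤ ∑ k ∈ Finset.range M, h k x + ∑' j, |h (j + M) x| := by
      have e1 : ∑ k ∈ Finset.range M, h k x + ∑' j, h (j + M) x = |f x| := by
        rw [Summable.sum_add_tsum_nat_add M hhx', hfabs.tsum_eq]
      have e2 : ∑' j, h (j + M) x ≤ ∑' j, |h (j + M) x| :=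
        Summable.tsum_le_tsum (fun j => le_abs_self _) ((summable_nat_add_iff M).2 hhx') hwh
      linarith
    have hval : (|g' 0| - ∑ k ∈ Finset.range M, h k) x
        = |g' 0 x| - ∑ k ∈ Finset.range M, h k x := by
      simp only [Pi.sub_apply, Pi.abs_apply, Finset.sum_apply]
    have htsum : ∑' j, w j x = (∑' j, |h (j + M) x|) + ∑' j, |g (j + N) x| := by
      rw [← Summable.tsum_add hwh hwg]
      exact tsum_congr fun j => hwxval j x
    rw [hval, htsum]
    linarith
  have hIg'0 : D.integral |g' 0| ≤ (∑ k ∈ Finset.range M, D.integral (h k))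
      + (∑' j, D.integral |h (j + M)|) + ∑' j, D.integral |g (j + N)| := by
    have e1 : D.integral (|g' 0| - ∑ k ∈ Finset.range M, h k)
        = D.integral |g' 0| - ∑ k ∈ Finset.range M, D.integral (h k) := by
      rw [D.integral_sub' (D.abs_mem' (hg'U 0)) (D.sum_mem' h hhU M), D.integral_sum' h hhU M]
    rw [e1, hwtsum] at hkey
    linarith
  have hfinal : ∑' j, D.integral |g' j|
      = D.integral |g' 0| + ∑' j, D.integral |g (j + N)| := by
    have e0 := Summable.sum_add_tsum_nat_add (f := fun j => D.integral |g' j|) 1 hg'S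
    rw [Finset.sum_range_one] at e0
    have e1 : ∑' j, D.integral |g' (j + 1)| = ∑' j, D.integral |g (j + N)| :=
      tsum_congr fun j => by rw [hg'succ]
    rw [← e0, e1]
  rw [hfinal]
  linarith

end DaniellSpace

/-- If `fₙ ∈ 𝒰*` and `∑ ∫|fₙ| < ∞`, then there exists `f ∈ 𝒰*` with
`f ≃ f₁ + f₂ + ⋯`, i.e. `f x = ∑ fₙ x` at every point of absolute convergence. -/
theorem daniell_Ustar_exists_sum {X : Type*} [Nonempty X] (D : DaniellSpace X)
    (fs : ℕ → X → ℝ) (hfs : ∀ n, fs n ∈ D.Ustar)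
    (hsum : Summable fun n => D.integralStar |fs n|) :
    ∃ f : X → ℝ, f ∈ D.Ustar ∧
      ∀ x, (Summable fun n => |fs n x|) → HasSum (fun n => fs n x) (f x) := by
  have habs' : ∀ n, ∃ t, D.Rep |fs n| t := fun n => by
    obtain ⟨g, hgrep⟩ := hfs n
    exact D.abs_mem_Ustar hgrep
  have hIS : ∀ n, D.integralStar |fs n| = ∑' k, D.integral ((habs' n).choose k) := fun n => by
    rw [DaniellSpace.integralStar, dif_pos (habs' n)]
  have hstep : ∀ n, ∃ gg : ℕ → X → ℝ, D.Rep (fs n) gg ∧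
      ∑' k, D.integral |gg k| ≤ D.integralStar |fs n| + (1 / 2 : ℝ) ^ n := by
    intro n
    obtain ⟨g, hgrep⟩ := hfs n
    obtain ⟨gg, hrep, hle⟩ := D.trim hgrep (habs' n).choose_spec
      (show (0 : ℝ) < (1 / 2 : ℝ) ^ n by positivity)
    exact ⟨gg, hrep, by rw [hIS n]; exact hle⟩
  choose G hGrep hGle using hstep
  have hGU : ∀ n k, G n k ∈ D.U := fun n k => (hGrep n).1 k
  have hrow : ∀ n, Summable fun k => D.integral |G n k| := fun n => (hGrep n).2.1
  have hInn : ∀ n k, 0 ≤ D.integral |G n k| := fun n k =>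
    D.integral_nonneg (D.abs_mem' (hGU n k)) fun x => by
      simp only [Pi.abs_apply]; exact abs_nonneg _
  have hc : Summable fun n => ∑' k, D.integral |G n k| :=
    Summable.of_nonneg_of_le (fun n => tsum_nonneg fun k => hInn n k) hGle
      (hsum.add summable_geometric_two)
  have hFpos : (0 : ℕ × ℕ → ℝ) ≤ fun p => D.integral |G p.1 p.2| := fun p => hInn p.1 p.2
  have hprod : Summable fun p : ℕ × ℕ => D.integral |G p.1 p.2| :=
    (summable_prod_of_nonneg hFpos).2 ⟨fun n => hrow n, hc⟩
  set e : ℕ ≃ ℕ × ℕ := Nat.pairEquiv.symm with he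
  refine ⟨fun x => ∑' n, fs n x, ⟨fun j => G (e j).1 (e j).2, fun j => hGU _ _, ?_, ?_⟩, ?_⟩
  · exact (Equiv.summable_iff e (f := fun p : ℕ × ℕ => D.integral |G p.1 p.2|)).2 hprod
  · intro x hx
    have hFx : Summable fun p : ℕ × ℕ => |G p.1 p.2 x| :=
      (Equiv.summable_iff e (f := fun p : ℕ × ℕ => |G p.1 p.2 x|)).1 hx
    have hFpos' : (0 : ℕ × ℕ → ℝ) ≤ fun p => |G p.1 p.2 x| := fun p => abs_nonneg _
    obtain ⟨hrowx, hcolx⟩ := (summable_prod_of_nonneg hFpos').1 hFx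
    have hnx : ∀ n, HasSum (fun k => G n k x) (fs n x) := fun n =>
      (hGrep n).2.2 x (hrowx n)
    have habsn : Summable fun n => |fs n x| := by
      refine Summable.of_nonneg_of_le (fun n => abs_nonneg _) (fun n => ?_) hcolx
      rw [← (hnx n).tsum_eq]
      simpa [Real.norm_eq_abs] using
        norm_tsum_le_tsum_norm (f := fun k => G n k x)
          (by simpa [Real.norm_eq_abs] using hrowx n)
    have h1 : Summable fun p : ℕ × ℕ => G p.1 p.2 x := Summable.of_abs hFx
    have h2 : ∑' p : ℕ × ℕ, G p.1 p.2 x = ∑' n, ∑' k, G n k x := Summable.tsum_prod h1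
    have h3 : ∑' n, ∑' k, G n k x = ∑' n, fs n x := tsum_congr fun n => (hnx n).tsum_eq
    have hFsum : HasSum (fun p : ℕ × ℕ => G p.1 p.2 x) (∑' n, fs n x) := by
      have h4 := h1.hasSum
      rwa [h2, h3] at h4
    exact (Equiv.hasSum_iff e (f := fun p : ℕ × ℕ => G p.1 p.2 x)).2 hFsum
  · intro x hx
    exact hx.of_abs.hasSum
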